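/- Let k ≥ 1 and let D be a Borel probability distribution on ℝ_{≥0}^k with 0 < BRev(D) < ∞. Then for every incentive-compatible, individually rational mechanism M = (q,p) with p measurable and Rev(D,M) well-defined, there exists a (finite or countably infinite) sequence X = (x_i)_{i=1}^N of nonzero points, each lying in the topological support of D, such that 9·BRev(D)·MenuGap(X) ≥ Rev(D,M); i.e., for every real r < Rev(D,M)/(9·BRev(D)) there exists a sequence Q with MenuGap(X,Q) ≥ r. -/

import Mathlib

open scoped BigOperators ENNReal NNReal
open Filter MeasureTheory

noncomputable section

namespace Stmt0

/-- Valuation / allocation vectors over `k` items. -/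
abbrev V (k : ℕ) := Fin k → ℝ

/-- Dot product. -/
def dot {k : ℕ} (x y : V k) : ℝ := ∑ t, x t * y t

/-- ℓ¹ norm. -/
def norm1 {k : ℕ} (x : V k) : ℝ := ∑ t, |x t|

/-- Sum of a (possibly divergent) series, as limsup of partial sums in `EReal`. -/
def eseries (f : ℕ → ℝ) : EReal :=
  Filter.limsup (fun n => ((∑ i ∈ Finset.range n, f i : ℝ) : EReal)) Filter.atTop

/-- Valid index set of a sequence of length `N` (finite or `⊤`), indices starting at 1. -/
def idx (N : ℕ∞) : Set ℕ := {i | 1 ≤ i ∧ (i : ℕ∞) ≤ N}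

/-- `gap_i^{X,Q} := min_{0 ≤ j < i} (q_i - q_j)·x_i`, the minimum ranging over previous
indices of the sequence together with the index `0` (where `Q 0 = 0`). -/
def gapS {k : ℕ} (S : Set ℕ) (X Q : ℕ → V k) (i : ℕ) : ℝ :=
  sInf {y | ∃ j : ℕ, (j ∈ S ∨ j = 0) ∧ j < i ∧ y = dot (Q i - Q j) (X i)}

/-- `MenuGap(X,Q) := ∑_{i} gap_i^{X,Q}/‖x_i‖₁`. -/
def menuGapS {k : ℕ} (S : Set ℕ) (X Q : ℕ → V k) : EReal :=
  eseries (S.indicator fun i => gapS S X Q i / norm1 (X i))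

/-- An admissible allocation sequence: `q_0 = 0` and all `q_i ∈ [0,1]^k`. -/
def admissibleQ {k : ℕ} (Q : ℕ → V k) : Prop :=
  Q 0 = 0 ∧ ∀ i t, Q i t ∈ Set.Icc (0:ℝ) 1

/-- `BRev(D) := sup_{t > 0} t · Pr_{v ∼ D}[∑ i, v i ≥ t]`. -/
def brev {k : ℕ} (μ : Measure (V k)) : ℝ≥0∞ :=
  ⨆ t : ℝ, ⨆ (_ : (0:ℝ) < t), ENNReal.ofReal t * μ {v | t ≤ ∑ i, v i}

/-- Topological support of a measure. -/
def msupport {k : ℕ} (μ : Measure (V k)) : Set (V k) :=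
  {x | ∀ U : Set (V k), IsOpen U → x ∈ U → 0 < μ U}

lemma measure_compl_msupport {k : ℕ} (μ : Measure (V k)) : μ (msupport μ)ᶜ = 0 := by
  classical
  set B := TopologicalSpace.countableBasis (V k)
  have hB := TopologicalSpace.isBasis_countableBasis (V k)
  have hcnt : ({s ∈ B | μ s = 0} : Set (Set (V k))).Countable :=
    (TopologicalSpace.countable_countableBasis (V k)).mono (Set.sep_subset _ _)
  have hU : μ (⋃₀ {s ∈ B | μ s = 0}) = 0 :=
    (measure_sUnion_null_iff hcnt).2 (fun s hs => hs.2)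
  refine measure_mono_null ?_ hU
  intro x hx
  simp only [Set.mem_compl_iff, msupport, Set.mem_setOf_eq] at hx
  push_neg at hx
  obtain ⟨U, hUo, hxU, hUz⟩ := hx
  have hUz' : μ U = 0 := le_antisymm (by simpa using hUz) zero_le
  obtain ⟨s, hsB, hxs, hsU⟩ := hB.exists_subset_of_mem_open hxU hUo
  exact ⟨s, ⟨hsB, measure_mono_null hsU hUz'⟩, hxs⟩

lemma exists_msupport {k : ℕ} (μ : Measure (V k)) {A : Set (V k)} (hA : 0 < μ A) :
    ∃ x ∈ A, x ∈ msupport μ := by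
  have h : μ (A ∩ msupport μ) ≠ 0 := by
    intro h0
    have : μ A ≤ μ (A ∩ msupport μ) + μ (msupport μ)ᶜ := by
      refine (measure_mono ?_).trans (measure_union_le _ _)
      intro x hx
      by_cases hxs : x ∈ msupport μ
      · exact Or.inl ⟨hx, hxs⟩
      · exact Or.inr hxs
    rw [h0, measure_compl_msupport] at this
    simp at this
    exact absurd this (by simpa using hA.ne')
  obtain ⟨x, hx⟩ := nonempty_of_measure_ne_zero h
  exact ⟨x, hx.1, hx.2⟩
lemma norm1_nonneg {k : ℕ} (x : V k) : 0 ≤ norm1 x :=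
  Finset.sum_nonneg (fun t _ => abs_nonneg _)

lemma dot_le_norm1 {k : ℕ} (x y : V k) (hx : ∀ s, 0 ≤ x s)
    (hy : ∀ s, y s ∈ Set.Icc (0:ℝ) 1) : dot x y ≤ norm1 x := by
  refine Finset.sum_le_sum (fun t _ => ?_)
  rw [abs_of_nonneg (hx t)]
  calc x t * y t ≤ x t * 1 := mul_le_mul_of_nonneg_left (hy t).2 (hx t)
  _ = x t := mul_one _

lemma norm1_eq_sum {k : ℕ} (x : V k) (hx : ∀ s, 0 ≤ x s) : norm1 x = ∑ s, x s :=
  Finset.sum_congr rfl (fun t _ => abs_of_nonneg (hx t))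


section main
variable {k : ℕ} (μ : Measure (V k)) [IsProbabilityMeasure μ]
  (q : V k → V k) (p : V k → ℝ)

lemma p_le_norm1 (hq : ∀ v t, q v t ∈ Set.Icc (0:ℝ) 1)
    (hIR : ∀ v : V k, (∀ t, 0 ≤ v t) → 0 ≤ dot v (q v) - p v)
    (v : V k) (hv : ∀ s, 0 ≤ v s) : p v ≤ norm1 v :=
  le_trans (by linarith [hIR v hv]) (dot_le_norm1 v (q v) hv (hq v))

lemma measurableSet_nonnegV : MeasurableSet {v : V k | ∀ s, 0 ≤ v s} := by
  have : {v : V k | ∀ s, 0 ≤ v s} = ⋂ s, {v | 0 ≤ v s} := by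
    ext v; simp
  rw [this]
  exact MeasurableSet.iInter (fun s => measurableSet_le measurable_const (measurable_pi_apply s))

lemma measurable_norm1 : Measurable (norm1 : V k → ℝ) := by
  apply Finset.measurable_sum
  exact fun t _ => (measurable_pi_apply t).abs

lemma pick (hμnn : ∀ᵐ v ∂μ, ∀ t, 0 ≤ v t) (hbfin : brev μ < ⊤)
    (hq : ∀ v t, q v t ∈ Set.Icc (0:ℝ) 1)
    (hIR : ∀ v : V k, (∀ t, 0 ≤ v t) → 0 ≤ dot v (q v) - p v)
    (t : ℝ) (ht : 0 < t) (hpos : 0 < μ {v | t < p v}) :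
    ∃ x, x ∈ msupport μ ∧ (∀ s, 0 ≤ x s) ∧ t < p x ∧ 0 < norm1 x ∧
      (μ {v | t < p v}).toReal * norm1 x ≤ 3/2 * (brev μ).toReal := by
  classical
  set G : Set (V k) := {v | ∀ s, 0 ≤ v s} with hG
  have hGc : μ Gᶜ = 0 := by
    have h := hμnn
    rw [ae_iff] at h
    simpa [hG, Set.compl_setOf] using h
  set S : Set (V k) := {v | t < p v} ∩ G with hS
  have hSeq : μ S = μ {v | t < p v} := by
    refine le_antisymm (measure_mono Set.inter_subset_left) ?_
    calc μ {v | t < p v} ≤ μ (({v | t < p v} ∩ G)) + μ ({v | t < p v} \ G) :=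
          measure_le_inter_add_diff _ _ _
    _ ≤ μ S + 0 := by
          gcongr
          exact le_of_eq (measure_mono_null (Set.diff_subset_compl _ _) hGc)
    _ = μ S := by rw [add_zero]
  have hSpos : 0 < μ S := hSeq ▸ hpos
  have hSle : ∀ v ∈ S, p v ≤ norm1 v := fun v hv =>
    p_le_norm1 q p hq hIR v hv.2
  set M : Set ℝ := {m | 0 < μ (S ∩ {v | norm1 v ≤ m})} with hM
  have hMne : M.Nonempty := by
    by_contra h
    rw [Set.not_nonempty_iff_eq_empty] at h
    have : μ S = 0 := by
      have hcov : S = ⋃ n : ℕ, S ∩ {v | norm1 v ≤ n} := by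
        ext v
        simp only [Set.mem_iUnion, Set.mem_inter_iff, Set.mem_setOf_eq]
        constructor
        · intro hv
          obtain ⟨n, hn⟩ := exists_nat_ge (norm1 v)
          exact ⟨n, hv, hn⟩
        · rintro ⟨n, hv, -⟩; exact hv
      rw [hcov]
      refine measure_iUnion_null (fun n => ?_)
      by_contra hn
      exact (Set.eq_empty_iff_forall_notMem.mp h (n : ℝ)) (pos_iff_ne_zero.mpr hn)
    exact absurd this hSpos.ne'
  have hMlb : ∀ m ∈ M, t ≤ m := by
    intro m hm
    by_contra hlt
    push_neg at hlt
    have : S ∩ {v | norm1 v ≤ m} = ∅ := by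
      ext v
      simp only [Set.mem_inter_iff, Set.mem_setOf_eq, Set.mem_empty_iff_false, iff_false]
      rintro ⟨hvS, hvm⟩
      have := hSle v hvS
      have : t < norm1 v := lt_of_lt_of_le hvS.1 this
      linarith
    rw [hM] at hm
    simp only [Set.mem_setOf_eq, this] at hm
    simp at hm
  have hMbdd : BddBelow M := ⟨t, hMlb⟩
  set I : ℝ := sInf M with hI
  have hIt : t ≤ I := le_csInf hMne hMlb
  have hIpos : 0 < I := lt_of_lt_of_le ht hIt
  -- measure bound: μ S ≤ μ {v | I ≤ ∑ s, v s}
  have hnullB : μ (S ∩ {v | norm1 v < I}) = 0 := by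
    have hcov : S ∩ {v | norm1 v < I} = ⋃ n : ℕ, S ∩ {v | norm1 v ≤ I - 1/(n+1)} := by
      ext v
      simp only [Set.mem_iUnion, Set.mem_inter_iff, Set.mem_setOf_eq]
      constructor
      · rintro ⟨hvS, hvI⟩
        obtain ⟨n, hn⟩ := exists_nat_one_div_lt (show (0:ℝ) < I - norm1 v by linarith)
        exact ⟨n, hvS, by push_cast at hn ⊢; linarith⟩
      · rintro ⟨n, hvS, hvn⟩
        refine ⟨hvS, lt_of_le_of_lt hvn ?_⟩
        have : (0:ℝ) < 1/(n+1) := by positivity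
        linarith
    rw [hcov]
    refine measure_iUnion_null (fun n => ?_)
    by_contra hn
    have hmem : (I - 1/(n+1)) ∈ M := pos_iff_ne_zero.mpr hn
    have := csInf_le hMbdd hmem
    have hpos' : (0:ℝ) < 1/(n+1) := by positivity
    rw [← hI] at this
    linarith
  have hmeasS : μ S ≤ μ {v | I ≤ ∑ s, v s} := by
    calc μ S ≤ μ (S ∩ {v | norm1 v < I}) + μ (S ∩ {v | I ≤ norm1 v}) := by
          refine (measure_mono ?_).trans (measure_union_le _ _)
          intro v hv
          rcases lt_or_ge (norm1 v) I with h | h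
          · exact Or.inl ⟨hv, h⟩
          · exact Or.inr ⟨hv, h⟩
    _ = μ (S ∩ {v | I ≤ norm1 v}) := by rw [hnullB, zero_add]
    _ ≤ μ {v | I ≤ ∑ s, v s} := by
          refine measure_mono ?_
          rintro v ⟨hvS, hvn⟩
          have := norm1_eq_sum v hvS.2
          simp only [Set.mem_setOf_eq]
          rw [← this]
          exact hvn
  have hbrev : ENNReal.ofReal I * μ S ≤ brev μ := by
    calc ENNReal.ofReal I * μ S ≤ ENNReal.ofReal I * μ {v | I ≤ ∑ s, v s} := by gcongr
    _ ≤ brev μ := by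
          rw [brev]
          exact le_iSup_of_le I (le_iSup_of_le hIpos le_rfl)
  have htoReal : (μ S).toReal * I ≤ (brev μ).toReal := by
    have h1 : (ENNReal.ofReal I * μ S).toReal ≤ (brev μ).toReal :=
      ENNReal.toReal_mono hbfin.ne hbrev
    rw [ENNReal.toReal_mul, ENNReal.toReal_ofReal hIpos.le] at h1
    linarith [h1]
  -- pick a point
  obtain ⟨m', hm'M, hm'lt⟩ := exists_lt_of_csInf_lt hMne (show sInf M < 3/2 * I by rw [← hI]; linarith)
  obtain ⟨x, hxA, hxsupp⟩ := exists_msupport μ hm'M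
  refine ⟨x, hxsupp, hxA.1.2, hxA.1.1, ?_, ?_⟩
  · have := hSle x hxA.1
    have := hxA.1.1
    simp only [Set.mem_setOf_eq] at this
    linarith [hSle x hxA.1, ht]
  · have hxn : norm1 x ≤ m' := hxA.2
    have h2 : norm1 x ≤ 3/2 * I := le_trans hxn hm'lt.le
    calc (μ {v | t < p v}).toReal * norm1 x = (μ S).toReal * norm1 x := by rw [hSeq]
    _ ≤ (μ S).toReal * (3/2 * I) := by
          refine mul_le_mul_of_nonneg_left h2 ENNReal.toReal_nonneg
    _ = 3/2 * ((μ S).toReal * I) := by ring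
    _ ≤ 3/2 * (brev μ).toReal := by linarith [htoReal]

-- a small helper: integral over a superlevel-set style bound
lemma setInt_le_const (hpint : Integrable p μ) (A : Set (V k)) (hA : MeasurableSet A)
    (c : ℝ) (hc : 0 ≤ c) (hbd : ∀ v ∈ A, p v ≤ c) :
    ∫ v in A, p v ∂μ ≤ c * (μ A).toReal := by
  calc ∫ v in A, p v ∂μ ≤ ∫ _ in A, c ∂μ := by
        refine setIntegral_mono_on hpint.integrableOn (integrableOn_const ?_) hA hbd
        exact (measure_lt_top μ A).ne
  _ = (μ A).toReal • c := by rw [setIntegral_const, measureReal_def]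
  _ = c * (μ A).toReal := by rw [smul_eq_mul]; ring


lemma dot_comm (x y : V k) : dot x y = dot y x := by
  simp only [dot, mul_comm]

lemma dot_sub (x a b : V k) : dot (a - b) x = dot x a - dot x b := by
  simp only [dot, Pi.sub_apply, sub_mul, ← Finset.sum_sub_distrib]
  congr 1
  funext t
  ring

omit [IsProbabilityMeasure μ] in
lemma assemble (hq : ∀ v t, q v t ∈ Set.Icc (0:ℝ) 1)
    (hpnn : ∀ v, 0 ≤ p v)
    (hIC : ∀ v w : V k, (∀ t, 0 ≤ v t) → (∀ t, 0 ≤ w t) →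
      dot v (q w) - p w ≤ dot v (q v) - p v)
    (hIR : ∀ v : V k, (∀ t, 0 ≤ v t) → 0 ≤ dot v (q v) - p v)
    (N : ℕ∞) (X : ℕ → V k)
    (hX0 : ∀ i : ℕ, 1 ≤ i → (i:ℕ∞) ≤ N → (∀ s, 0 ≤ X i s) ∧ 0 < norm1 (X i))
    (hmono : ∀ i j : ℕ, 1 ≤ i → i ≤ j → (j:ℕ∞) ≤ N → p (X i) ≤ p (X j))
    (r : ℝ) (n₁ : ℕ) (hn₁N : ((n₁:ℕ):ℕ∞) ≤ N)
    (hr : r ≤ ∑ i ∈ Finset.range n₁,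
      (p (X (i+1)) - (if i = 0 then 0 else p (X i))) / norm1 (X (i+1))) :
    ∃ Q : ℕ → V k, admissibleQ Q ∧ (r : EReal) ≤ menuGapS (idx N) X Q := by
  classical
  set Q : ℕ → V k := fun j => if j = 0 then 0 else q (X j) with hQdef
  have hQ0 : Q 0 = 0 := by rw [hQdef]; simp
  have hQj : ∀ j, j ≠ 0 → Q j = q (X j) := by intro j hj; rw [hQdef]; simp [hj]
  refine ⟨Q, ⟨hQ0, ?_⟩, ?_⟩
  · intro i t
    rcases eq_or_ne i 0 with h | h
    · rw [h, hQ0]; exact ⟨le_rfl, zero_le_one⟩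
    · rw [hQj i h]; exact hq (X i) t
  set S : Set ℕ := idx N with hSdef
  have hSmem : ∀ i, i ∈ S ↔ (1 ≤ i ∧ (i:ℕ∞) ≤ N) := fun i => Iff.rfl
  set f : ℕ → ℝ := S.indicator (fun i => gapS S X Q i / norm1 (X i)) with hfdef
  set c : ℕ → ℝ := fun i => (p (X i) - (if i = 1 then 0 else p (X (i-1)))) / norm1 (X i)
    with hcdef
  -- the key gap bound
  have hgap : ∀ i ∈ S, c i ≤ f i := by
    intro i hi
    obtain ⟨hi1, hiN⟩ := (hSmem i).mp hi
    obtain ⟨hXnn, hXn⟩ := hX0 i hi1 hiN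
    have hkey : p (X i) - (if i = 1 then 0 else p (X (i-1))) ≤ gapS S X Q i := by
      refine le_csInf ⟨dot (Q i - Q 0) (X i), 0, Or.inr rfl, by omega, rfl⟩ ?_
      rintro y ⟨j, hj, hji, rfl⟩
      rcases hj with hjS | rfl
      · obtain ⟨hj1, hjN⟩ := (hSmem j).mp hjS
        have hi2 : 2 ≤ i := by omega
        obtain ⟨hXjnn, _⟩ := hX0 j hj1 hjN
        have hIC' := hIC (X i) (X j) hXnn hXjnn
        have hiN' : ((i-1 : ℕ):ℕ∞) ≤ N := le_trans (Nat.cast_le.mpr (Nat.sub_le i 1)) hiN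
        have hmono' : p (X j) ≤ p (X (i-1)) := hmono j (i-1) hj1 (by omega) hiN'
        have hQi : Q i = q (X i) := hQj i (by omega)
        have hQjj : Q j = q (X j) := hQj j (by omega)
        rw [hQi, hQjj, dot_sub]
        have hif : (if i = 1 then (0:ℝ) else p (X (i-1))) = p (X (i-1)) := by
          rw [if_neg (by omega)]
        rw [hif]
        linarith
      · rw [hQ0, sub_zero, hQj i (by omega), dot_comm]
        have hIR' := hIR (X i) hXnn
        have : (0:ℝ) ≤ (if i = 1 then 0 else p (X (i-1))) := by
          split
          · exact le_rfl
          · exact hpnn _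
        linarith
    have : f i = gapS S X Q i / norm1 (X i) := Set.indicator_of_mem hi _
    rw [this, hcdef]
    exact (div_le_div_iff_of_pos_right hXn).mpr hkey
  have hcnn : ∀ i ∈ S, 0 ≤ c i := by
    intro i hi
    obtain ⟨hi1, hiN⟩ := (hSmem i).mp hi
    obtain ⟨_, hXn⟩ := hX0 i hi1 hiN
    refine div_nonneg ?_ hXn.le
    rcases eq_or_ne i 1 with h | h
    · rw [h]; simp [hpnn]
    · rw [if_neg h]
      have := hmono (i-1) i (by omega) (by omega) hiN
      linarith
  have hfnn : ∀ i, 0 ≤ f i := by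
    intro i
    by_cases hi : i ∈ S
    · exact le_trans (hcnn i hi) (hgap i hi)
    · rw [hfdef, Set.indicator_of_notMem hi]
  -- partial sums are eventually ≥ r
  have hev : ∀ n, n₁ + 1 ≤ n → r ≤ ∑ i ∈ Finset.range n, f i := by
    intro n hn
    have h1 : ∑ i ∈ Finset.range (n₁+1), f i ≤ ∑ i ∈ Finset.range n, f i :=
      Finset.sum_le_sum_of_subset_of_nonneg
        (Finset.range_subset_range.mpr hn) (fun i _ _ => hfnn i)
    have h2 : ∑ i ∈ Finset.range (n₁+1), f i
        = (∑ i ∈ Finset.range n₁, f (i+1)) + f 0 := Finset.sum_range_succ' f n₁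
    have h0S : (0:ℕ) ∉ S := by
      rw [hSmem]
      simp
    have h0 : f 0 = 0 := by
      rw [hfdef, Set.indicator_of_notMem h0S]
    have h3 : ∀ i ∈ Finset.range n₁,
        (p (X (i+1)) - (if i = 0 then 0 else p (X i))) / norm1 (X (i+1)) ≤ f (i+1) := by
      intro i hi
      rw [Finset.mem_range] at hi
      have hiS : (i+1) ∈ S := by
        rw [hSmem]
        refine ⟨by omega, le_trans (Nat.cast_le.mpr (by omega)) hn₁N⟩
      have := hgap (i+1) hiS
      rw [hcdef] at this
      simp only [Nat.add_sub_cancel] at this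
      have hifeq : (if i + 1 = 1 then (0:ℝ) else p (X i)) = (if i = 0 then 0 else p (X i)) := by
        rcases eq_or_ne i 0 with h | h
        · simp [h]
        · rw [if_neg (by omega), if_neg h]
      rw [hifeq] at this
      exact this
    calc r ≤ ∑ i ∈ Finset.range n₁,
          (p (X (i+1)) - (if i = 0 then 0 else p (X i))) / norm1 (X (i+1)) := hr
    _ ≤ ∑ i ∈ Finset.range n₁, f (i+1) := Finset.sum_le_sum h3
    _ = ∑ i ∈ Finset.range (n₁+1), f i - f 0 := by rw [h2]; ring
    _ = ∑ i ∈ Finset.range (n₁+1), f i := by rw [h0]; ring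
    _ ≤ ∑ i ∈ Finset.range n, f i := h1
  -- limsup argument
  rw [menuGapS, eseries, Filter.limsup_eq]
  refine le_sInf ?_
  intro a ha
  have hev' : ∀ᶠ n in atTop, (r : EReal) ≤
      ((∑ i ∈ Finset.range n, f i : ℝ) : EReal) := by
    filter_upwards [Filter.eventually_ge_atTop (n₁+1)] with n hn
    exact_mod_cast EReal.coe_le_coe_iff.mpr (hev n hn)
  obtain ⟨n, h1, h2⟩ := (hev'.and ha).exists
  exact le_trans h1 h2

theorem stmt0' (hk : 1 ≤ k)
    (hμnn : ∀ᵐ v ∂μ, ∀ t, 0 ≤ v t)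
    (hb0 : 0 < brev μ) (hbfin : brev μ < ⊤)
    (hq : ∀ v t, q v t ∈ Set.Icc (0:ℝ) 1)
    (hpnn : ∀ v, 0 ≤ p v)
    (hIC : ∀ v w : V k, (∀ t, 0 ≤ v t) → (∀ t, 0 ≤ w t) →
      dot v (q w) - p w ≤ dot v (q v) - p v)
    (hIR : ∀ v : V k, (∀ t, 0 ≤ v t) → 0 ≤ dot v (q v) - p v)
    (hpmeas : Measurable p) (hpint : Integrable p μ) :
    ∃ (N : ℕ∞) (X : ℕ → V k),
      (∀ i ∈ idx N, X i ≠ 0 ∧ X i ∈ msupport μ) ∧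
      ∀ r : ℝ, r < (∫ v, p v ∂μ) / (9 * (brev μ).toReal) →
        ∃ Q : ℕ → V k, admissibleQ Q ∧ (r : EReal) ≤ menuGapS (idx N) X Q := by
  classical
  set R : ℝ := ∫ v, p v ∂μ with hRdef
  set B : ℝ := (brev μ).toReal with hBdef
  have hB : 0 < B := ENNReal.toReal_pos hb0.ne' hbfin.ne
  have hR0 : 0 ≤ R := integral_nonneg (fun v => hpnn v)
  rcases eq_or_lt_of_le hR0 with hR | hR
  · -- trivial case R = 0
    refine ⟨0, fun _ => 0, ?_, ?_⟩
    · intro i hi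
      exfalso
      obtain ⟨h1, h2⟩ := hi
      have : (i:ℕ∞) = 0 := le_antisymm h2 zero_le
      have : i = 0 := by exact_mod_cast this
      omega
    · intro r hr
      rw [← hR] at hr
      simp only [zero_div] at hr
      refine ⟨fun _ => 0, ⟨rfl, fun i t => ⟨le_rfl, zero_le_one⟩⟩, ?_⟩
      have hidx : idx 0 = (∅ : Set ℕ) := by
        ext i
        simp only [idx, Set.mem_setOf_eq, Set.mem_empty_iff_false, iff_false, not_and]
        intro h1 h2
        have : (i:ℕ∞) = 0 := le_antisymm h2 zero_le
        have : i = 0 := by exact_mod_cast this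
        omega
      rw [menuGapS, hidx]
      simp only [Set.indicator_empty]
      rw [eseries]
      have : (fun n => ((∑ i ∈ Finset.range n, (0:ℝ) : ℝ) : EReal)) = fun _ => (0 : EReal) := by
        funext n; simp
      rw [this, Filter.limsup_const]
      exact_mod_cast hr.le
  · -- main case 0 < R
    have hpick : ∀ t : ℝ, 0 < t → 0 < μ {v | t < p v} →
        ∃ x, x ∈ msupport μ ∧ (∀ s, 0 ≤ x s) ∧ t < p x ∧ 0 < norm1 x ∧
          (μ {v | t < p v}).toReal * norm1 x ≤ 3/2 * B :=
      fun t ht hpos => pick μ q p hμnn hbfin hq hIR t ht hpos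
    choose! F hF1 hF2 hF3 hF4 hF5 using hpick
    set L : ℕ → ℝ := fun n => Nat.rec (R/3) (fun _ ih => 2 * p (F ih)) n with hLdef
    have hL0 : L 0 = R / 3 := rfl
    have hLs : ∀ n, L (n + 1) = 2 * p (F (L n)) := fun n => rfl
    set P : ℕ → ℝ := fun n => p (F (L n)) with hPdef
    set term : ℕ → ℝ := fun n => (P n - (if n = 0 then 0 else P (n-1))) / norm1 (F (L n))
      with htermdef
    -- if the measure above level c vanishes then R ≤ c
    have hbound : ∀ c : ℝ, 0 ≤ c → μ {v | c < p v} = 0 → R ≤ c := by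
      intro c hc h0
      have hae : ∀ᵐ v ∂μ, p v ≤ c := by
        rw [ae_iff]
        simpa [not_le] using h0
      calc R = ∫ v, p v ∂μ := rfl
      _ ≤ ∫ _, c ∂μ := integral_mono_ae hpint (integrable_const c) hae
      _ = c := by simp
    have halive0 : 0 < μ {v | L 0 < p v} := by
      by_contra h
      push_neg at h
      have h0 : μ {v | L 0 < p v} = 0 := le_antisymm h zero_le
      have := hbound (L 0) (by rw [hL0]; positivity) h0
      rw [hL0] at this
      linarith
    -- the inductive claim
    have claim : ∀ n, (∀ m, m ≤ n → 0 < μ {v | L m < p v}) →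
        (0 < L n) ∧ (L n < P n) ∧ (∀ m, m ≤ n → P m ≤ P n) ∧
        (∫ v in {v | p v ≤ 2 * P n}, p v ∂μ ≤
          R/3 + 6*B*(∑ i ∈ Finset.range (n+1), term i)) := by
      intro n
      induction n with
      | zero =>
        intro halive
        have hL0pos : 0 < L 0 := by rw [hL0]; positivity
        have ha0 := halive 0 le_rfl
        have hP0 : L 0 < P 0 := hF3 (L 0) hL0pos ha0
        have hn0 : 0 < norm1 (F (L 0)) := hF4 (L 0) hL0pos ha0
        have h5 := hF5 (L 0) hL0pos ha0
        refine ⟨hL0pos, hP0, fun m hm => by rw [Nat.le_zero.mp hm], ?_⟩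
        have hP0pos : 0 < P 0 := lt_trans hL0pos hP0
        have hsub : {v | p v ≤ 2 * P 0} = {v | p v ≤ R/3} ∪ {v | R/3 < p v ∧ p v ≤ 2 * P 0} := by
          ext v
          simp only [Set.mem_setOf_eq, Set.mem_union]
          constructor
          · intro hv
            rcases le_or_gt (p v) (R/3) with h | h
            · exact Or.inl h
            · exact Or.inr ⟨h, hv⟩
          · rintro (h | ⟨h1, h2⟩)
            · calc p v ≤ R/3 := h
              _ ≤ 2 * P 0 := by rw [hL0] at hP0; linarith
            · exact h2
        have hm1 : MeasurableSet {v | p v ≤ R/3} := measurableSet_le hpmeas measurable_const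
        have hm2 : MeasurableSet {v | R/3 < p v ∧ p v ≤ 2 * P 0} :=
          (measurableSet_lt measurable_const hpmeas).inter (measurableSet_le hpmeas measurable_const)
        have hdisj : Disjoint {v | p v ≤ R/3} {v | R/3 < p v ∧ p v ≤ 2 * P 0} := by
          rw [Set.disjoint_left]
          intro v hv hv2
          exact absurd hv2.1 (not_lt.mpr hv)
        have hsplit : ∫ v in {v | p v ≤ 2 * P 0}, p v ∂μ =
            (∫ v in {v | p v ≤ R/3}, p v ∂μ) +
            ∫ v in {v | R/3 < p v ∧ p v ≤ 2 * P 0}, p v ∂μ := by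
          rw [hsub]
          exact setIntegral_union hdisj hm2 hpint.integrableOn hpint.integrableOn
        have h1 : ∫ v in {v | p v ≤ R/3}, p v ∂μ ≤ R/3 := by
          calc ∫ v in {v | p v ≤ R/3}, p v ∂μ ≤ R/3 * (μ {v | p v ≤ R/3}).toReal :=
                setInt_le_const μ p hpint _ hm1 _ (by positivity) (fun v hv => hv)
          _ ≤ R/3 * 1 := by
                refine mul_le_mul_of_nonneg_left ?_ (by positivity)
                calc (μ {v | p v ≤ R/3}).toReal ≤ (μ Set.univ).toReal := by
                      refine ENNReal.toReal_mono (measure_ne_top μ _) (measure_mono (Set.subset_univ _))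
                _ = 1 := by simp
          _ = R/3 := mul_one _
        have h2 : ∫ v in {v | R/3 < p v ∧ p v ≤ 2 * P 0}, p v ∂μ ≤ 6*B*term 0 := by
          have hmono : (μ {v | R/3 < p v ∧ p v ≤ 2 * P 0}).toReal ≤ (μ {v | L 0 < p v}).toReal := by
            refine ENNReal.toReal_mono (measure_ne_top μ _) (measure_mono ?_)
            intro v hv
            rw [hL0]
            exact hv.1
          calc ∫ v in {v | R/3 < p v ∧ p v ≤ 2 * P 0}, p v ∂μ
              ≤ 2 * P 0 * (μ {v | R/3 < p v ∧ p v ≤ 2 * P 0}).toReal :=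
                setInt_le_const μ p hpint _ hm2 _ (by positivity) (fun v hv => hv.2)
          _ ≤ 2 * P 0 * (μ {v | L 0 < p v}).toReal := by
                exact mul_le_mul_of_nonneg_left hmono (by positivity)
          _ ≤ 6*B*term 0 := by
                have hterm : term 0 = P 0 / norm1 (F (L 0)) := by
                  rw [htermdef]; simp
                rw [hterm, ← mul_div_assoc, le_div_iff₀ hn0]
                have key : 2 * P 0 * ((μ {v | L 0 < p v}).toReal * norm1 (F (L 0)))
                    ≤ 2 * P 0 * (3/2 * B) := mul_le_mul_of_nonneg_left h5 (by positivity)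
                nlinarith [key, hB.le, hP0pos.le]
        rw [hsplit]
        have : ∑ i ∈ Finset.range 1, term i = term 0 := by simp
        rw [this]
        linarith
      | succ n ih =>
        intro halive
        have halive' : ∀ m, m ≤ n → 0 < μ {v | L m < p v} :=
          fun m hm => halive m (le_trans hm (Nat.le_succ n))
        obtain ⟨hLn, hLP, hmono, hint⟩ := ih halive'
        have hPn : 0 < P n := lt_trans hLn hLP
        have hLs1 : L (n+1) = 2 * P n := hLs n
        have hLpos : 0 < L (n+1) := by rw [hLs1]; positivity
        have ha := halive (n+1) le_rfl
        have hP1 : L (n+1) < P (n+1) := hF3 (L (n+1)) hLpos ha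
        have hn1 : 0 < norm1 (F (L (n+1))) := hF4 (L (n+1)) hLpos ha
        have h5 := hF5 (L (n+1)) hLpos ha
        have hPP : 2 * P n < P (n+1) := by rw [← hLs1]; exact hP1
        have hPmono : P n ≤ P (n+1) := by linarith
        refine ⟨hLpos, hP1, ?_, ?_⟩
        · intro m hm
          rcases Nat.le_succ_iff.mp hm with h | h
          · exact le_trans (hmono m h) hPmono
          · rw [h]
        · have hP1pos : 0 < P (n+1) := lt_trans hLpos hP1
          have hsub : {v | p v ≤ 2 * P (n+1)} =
              {v | p v ≤ 2 * P n} ∪ {v | 2 * P n < p v ∧ p v ≤ 2 * P (n+1)} := by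
            ext v
            simp only [Set.mem_setOf_eq, Set.mem_union]
            constructor
            · intro hv
              rcases le_or_gt (p v) (2 * P n) with h | h
              · exact Or.inl h
              · exact Or.inr ⟨h, hv⟩
            · rintro (h | ⟨h1, h2⟩)
              · linarith
              · exact h2
          have hm2 : MeasurableSet {v | 2 * P n < p v ∧ p v ≤ 2 * P (n+1)} :=
            (measurableSet_lt measurable_const hpmeas).inter
              (measurableSet_le hpmeas measurable_const)
          have hdisj : Disjoint {v | p v ≤ 2 * P n} {v | 2 * P n < p v ∧ p v ≤ 2 * P (n+1)} := by
            rw [Set.disjoint_left]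
            intro v hv hv2
            exact absurd hv2.1 (not_lt.mpr hv)
          have hsplit : ∫ v in {v | p v ≤ 2 * P (n+1)}, p v ∂μ =
              (∫ v in {v | p v ≤ 2 * P n}, p v ∂μ) +
              ∫ v in {v | 2 * P n < p v ∧ p v ≤ 2 * P (n+1)}, p v ∂μ := by
            rw [hsub]
            exact setIntegral_union hdisj hm2 hpint.integrableOn hpint.integrableOn
          have h2 : ∫ v in {v | 2 * P n < p v ∧ p v ≤ 2 * P (n+1)}, p v ∂μ ≤ 6*B*term (n+1) := by
            have hmono' : (μ {v | 2 * P n < p v ∧ p v ≤ 2 * P (n+1)}).toReal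
                ≤ (μ {v | L (n+1) < p v}).toReal := by
              refine ENNReal.toReal_mono (measure_ne_top μ _) (measure_mono ?_)
              intro v hv
              rw [Set.mem_setOf_eq, hLs1]
              exact hv.1
            calc ∫ v in {v | 2 * P n < p v ∧ p v ≤ 2 * P (n+1)}, p v ∂μ
                ≤ 2 * P (n+1) * (μ {v | 2 * P n < p v ∧ p v ≤ 2 * P (n+1)}).toReal :=
                  setInt_le_const μ p hpint _ hm2 _ (by positivity) (fun v hv => hv.2)
            _ ≤ 2 * P (n+1) * (μ {v | L (n+1) < p v}).toReal :=
                  mul_le_mul_of_nonneg_left hmono' (by positivity)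
            _ ≤ 6*B*term (n+1) := by
                  have hterm : term (n+1) = (P (n+1) - P n) / norm1 (F (L (n+1))) := by
                    rw [htermdef]; simp
                  rw [hterm, ← mul_div_assoc, le_div_iff₀ hn1]
                  have key : 2 * P (n+1) * ((μ {v | L (n+1) < p v}).toReal * norm1 (F (L (n+1))))
                      ≤ 2 * P (n+1) * (3/2 * B) := mul_le_mul_of_nonneg_left h5 (by positivity)
                  nlinarith [key, hB.le, hP1pos.le, hPP]
          rw [hsplit, Finset.sum_range_succ, mul_add]
          linarith
    -- the sequence of points
    set X : ℕ → V k := fun i => F (L (i - 1)) with hXdef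
    have hsums : ∀ i : ℕ, (p (X (i+1)) - (if i = 0 then 0 else p (X i))) / norm1 (X (i+1))
        = term i := by
      intro i
      rw [htermdef, hXdef, hPdef]
      simp only [Nat.add_sub_cancel]
    by_cases hfin : ∃ n, ¬ 0 < μ {v | L n < p v}
    · -- stopped case
      set n₀ := Nat.find hfin with hn₀def
      have halive : ∀ m, m < n₀ → 0 < μ {v | L m < p v} :=
        fun m hm => not_not.mp (Nat.find_min hfin hm)
      have hn₀pos : 0 < n₀ := by
        rcases Nat.eq_zero_or_pos n₀ with h | h
        · exfalso
          have hspec := Nat.find_spec hfin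
          rw [← hn₀def, h] at hspec
          exact hspec halive0
        · exact h
      obtain ⟨n, hn⟩ : ∃ n, n₀ = n + 1 := ⟨n₀ - 1, by omega⟩
      have halive' : ∀ m, m ≤ n → 0 < μ {v | L m < p v} := fun m hm => halive m (by omega)
      obtain ⟨hLn, hLPn, hmonoP, hint⟩ := claim n halive'
      have hall : ∀ m, m ≤ n → 0 < L m ∧ L m < P m := by
        intro m hm
        obtain ⟨h1, h2, _, _⟩ := claim m (fun m' hm' => halive' m' (le_trans hm' hm))
        exact ⟨h1, h2⟩
      refine ⟨(n₀ : ℕ∞), X, ?_, ?_⟩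
      · intro i hi
        obtain ⟨hi1, hiN⟩ := hi
        have hi' : i ≤ n₀ := by exact_mod_cast hiN
        have him : i - 1 ≤ n := by omega
        obtain ⟨hLm, _⟩ := hall (i-1) him
        have ham := halive' (i-1) him
        have hnrm := hF4 (L (i-1)) hLm ham
        constructor
        · intro h0
          rw [hXdef] at h0
          simp only at h0
          rw [h0] at hnrm
          simp [norm1] at hnrm
        · exact hF1 _ hLm ham
      · intro r hr
        have hstop : μ {v | L n₀ < p v} = 0 := by
          have hspec := Nat.find_spec hfin
          rw [← hn₀def] at hspec
          push_neg at hspec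
          exact le_antisymm hspec zero_le
        have hL₀ : L n₀ = 2 * P n := by rw [hn]
        have hRle : R ≤ R/3 + 6*B*(∑ i ∈ Finset.range (n+1), term i) := by
          have hms : MeasurableSet {v | p v ≤ 2 * P n} := measurableSet_le hpmeas measurable_const
          have hsplit : R = (∫ v in {v | p v ≤ 2 * P n}, p v ∂μ)
              + ∫ v in {v | p v ≤ 2 * P n}ᶜ, p v ∂μ := (integral_add_compl hms hpint).symm
          have hcompl : {v : V k | p v ≤ 2 * P n}ᶜ = {v | L n₀ < p v} := by
            ext v
            simp [not_le, hL₀]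
          have hz : ∫ v in {v | p v ≤ 2 * P n}ᶜ, p v ∂μ = 0 := by
            rw [hcompl, Measure.restrict_eq_zero.mpr hstop, integral_zero_measure]
          rw [hz, add_zero] at hsplit
          conv_lhs => rw [hsplit]
          exact hint
        have hrsum : r < ∑ i ∈ Finset.range (n+1), term i := by
          rw [lt_div_iff₀ (by positivity)] at hr
          have h9 : (9*B)*r < (9*B)*(∑ i ∈ Finset.range (n+1), term i) := by linarith
          exact lt_of_mul_lt_mul_left h9 (by positivity)
        refine assemble q p hq hpnn hIC hIR (n₀ : ℕ∞) X ?_ ?_ r (n+1)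
          (by exact_mod_cast (by omega : n+1 ≤ n₀)) ?_
        · intro i hi1 hiN
          have hi' : i ≤ n₀ := by exact_mod_cast hiN
          have him : i - 1 ≤ n := by omega
          obtain ⟨hLm, _⟩ := hall (i-1) him
          have ham := halive' (i-1) him
          exact ⟨hF2 _ hLm ham, hF4 _ hLm ham⟩
        · intro i j hi1 hij hjN
          have hj' : j ≤ n₀ := by exact_mod_cast hjN
          have hjm : j - 1 ≤ n := by omega
          obtain ⟨_, _, hmono', _⟩ := claim (j-1) (fun m' hm' => halive' m' (le_trans hm' hjm))
          have := hmono' (i-1) (by omega)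
          rw [hXdef, hPdef] at *
          exact this
        · rw [Finset.sum_congr rfl (fun i _ => hsums i)]
          exact hrsum.le
    · -- infinite case
      push_neg at hfin
      have hfin' : ∀ n, 0 < μ {v | L n < p v} := fun n => hfin n
      have hclaim := fun n => claim n (fun m _ => hfin' m)
      have hLpos : ∀ n, 0 < L n := fun n => (hclaim n).1
      have hLP : ∀ n, L n < P n := fun n => (hclaim n).2.1
      have hLstep : ∀ n, 2 * L n < L (n+1) := by
        intro n
        rw [hLs n]
        have h1 : L n < p (F (L n)) := hLP n
        have := hLpos n
        linarith
      have hLge : ∀ n, (R/3) * 2^n ≤ L n := by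
        intro n
        induction n with
        | zero => simp [hL0]
        | succ m ih =>
          have := hLstep m
          have h2 : (R/3) * 2^(m+1) = 2 * ((R/3) * 2^m) := by ring
          rw [h2]
          linarith
      have hLtop : Tendsto L atTop atTop := by
        refine tendsto_atTop_mono hLge ?_
        exact Tendsto.const_mul_atTop (by positivity)
          (tendsto_pow_atTop_atTop_of_one_lt one_lt_two)
      have hmsets : ∀ n : ℕ, MeasurableSet {v : V k | p v ≤ 2 * P n} :=
        fun n => measurableSet_le hpmeas measurable_const
      have htend : Tendsto (fun n => ∫ v in {v | p v ≤ 2 * P n}, p v ∂μ) atTop (nhds R) := by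
        have hdct := MeasureTheory.tendsto_integral_of_dominated_convergence
          (F := fun n => Set.indicator {v : V k | p v ≤ 2 * P n} p) (f := p) (μ := μ)
          (bound := p)
          (fun n => (hpmeas.indicator (hmsets n)).aestronglyMeasurable)
          hpint
          (fun n => Filter.Eventually.of_forall (fun v => ?_))
          (Filter.Eventually.of_forall (fun v => ?_))
        · have : ∀ n, ∫ v, Set.indicator {v : V k | p v ≤ 2 * P n} p v ∂μ
              = ∫ v in {v | p v ≤ 2 * P n}, p v ∂μ :=
            fun n => integral_indicator (hmsets n)
          exact (funext this : _) ▸ hdct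
        · rw [Real.norm_eq_abs, abs_of_nonneg (Set.indicator_nonneg (fun x _ => hpnn x) v)]
          exact Set.indicator_le_self' (fun x _ => hpnn x) v
        · have hev : ∀ᶠ n in atTop, Set.indicator {v' : V k | p v' ≤ 2 * P n} p v = p v := by
            filter_upwards [hLtop.eventually_ge_atTop (p v)] with n hn
            refine Set.indicator_of_mem ?_ p
            have h1 := hLP n
            have h2 := hLpos n
            show p v ≤ 2 * P n
            linarith
          exact tendsto_const_nhds.congr' (by filter_upwards [hev] with n h; exact h.symm)
      refine ⟨⊤, X, ?_, ?_⟩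
      · intro i hi
        obtain ⟨hi1, _⟩ := hi
        have hLm := hLpos (i-1)
        have ham := hfin' (i-1)
        have hnrm := hF4 (L (i-1)) hLm ham
        constructor
        · intro h0
          rw [hXdef] at h0
          simp only at h0
          rw [h0] at hnrm
          simp [norm1] at hnrm
        · exact hF1 _ hLm ham
      · intro r hr
        have hlt : R/3 + 6*B*r < R := by
          rw [lt_div_iff₀ (by positivity)] at hr
          linarith
        obtain ⟨n, hn⟩ := (htend.eventually (eventually_gt_nhds hlt)).exists
        have hint := (hclaim n).2.2.2
        have hrsum : r < ∑ i ∈ Finset.range (n+1), term i := by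
          have h6 : (6*B)*r < (6*B)*(∑ i ∈ Finset.range (n+1), term i) := by linarith
          exact lt_of_mul_lt_mul_left h6 (by positivity)
        refine assemble q p hq hpnn hIC hIR ⊤ X ?_ ?_ r (n+1) le_top ?_
        · intro i hi1 _
          exact ⟨hF2 _ (hLpos (i-1)) (hfin' (i-1)), hF4 _ (hLpos (i-1)) (hfin' (i-1))⟩
        · intro i j hi1 hij _
          have hmono' := (hclaim (j-1)).2.2.1
          have := hmono' (i-1) (by omega)
          rw [hXdef, hPdef] at *
          exact this
        · rw [Finset.sum_congr rfl (fun i _ => hsums i)]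
          exact hrsum.le


end main

theorem stmt0 (k : ℕ) (hk : 1 ≤ k) (μ : Measure (V k)) [IsProbabilityMeasure μ]
    (hμnn : ∀ᵐ v ∂μ, ∀ t, 0 ≤ v t)
    (hb0 : 0 < brev μ) (hbfin : brev μ < ⊤)
    (q : V k → V k) (p : V k → ℝ)
    (hq : ∀ v t, q v t ∈ Set.Icc (0:ℝ) 1)
    (hpnn : ∀ v, 0 ≤ p v)
    (hIC : ∀ v w : V k, (∀ t, 0 ≤ v t) → (∀ t, 0 ≤ w t) →
      dot v (q w) - p w ≤ dot v (q v) - p v)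
    (hIR : ∀ v : V k, (∀ t, 0 ≤ v t) → 0 ≤ dot v (q v) - p v)
    (hpmeas : Measurable p) (hpint : Integrable p μ) :
    ∃ (N : ℕ∞) (X : ℕ → V k),
      (∀ i ∈ idx N, X i ≠ 0 ∧ X i ∈ msupport μ) ∧
      ∀ r : ℝ, r < (∫ v, p v ∂μ) / (9 * (brev μ).toReal) →
        ∃ Q : ℕ → V k, admissibleQ Q ∧ (r : EReal) ≤ menuGapS (idx N) X Q :=
  stmt0' μ q p hk hμnn hb0 hbfin hq hpnn hIC hIR hpmeas hpint

end Stmt0
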